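/- Let X, Y be totally bounded metric spaces with s(X, δ) ≥ s(Y, δ) for every δ > 0, where s(Z, δ) is the supremum of the sum of pairwise distances over nonempty finite δ-separated subsets of Z. Then (X, Y) is a strongly plastic pair: every noncontractive map f : X → Y is an isometric embedding. -/

import Mathlib

/-- Sum of pairwise distances of a finite set. -/
noncomputable def sigmaSum {Z : Type*} [MetricSpace Z] (A : Finset Z) : ℝ :=
  ∑ a ∈ A, ∑ b ∈ A, dist a b

/-- A finite set is `t`-separated if distinct elements are at distance `≥ t`. -/
def IsSeparated' {Z : Type*} [MetricSpace Z] (t : ℝ) (A : Set Z) : Prop :=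
  ∀ a ∈ A, ∀ b ∈ A, a ≠ b → t ≤ dist a b

/-- `s(Z, t)`: supremum of `σ(B)` over nonempty finite `t`-separated subsets of `Z`. -/
noncomputable def sSep (Z : Type*) [MetricSpace Z] (t : ℝ) : ℝ :=
  sSup { s : ℝ | ∃ B : Finset Z, B.Nonempty ∧ IsSeparated' t (B : Set Z) ∧ s = sigmaSum B }

lemma sigmaSum_mono {Z : Type*} [MetricSpace Z] {A B : Finset Z} (hAB : A ⊆ B) :
    sigmaSum A ≤ sigmaSum B := by
  unfold sigmaSum
  calc ∑ a ∈ A, ∑ b ∈ A, dist a b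
      ≤ ∑ a ∈ A, ∑ b ∈ B, dist a b :=
        Finset.sum_le_sum fun a _ =>
          Finset.sum_le_sum_of_subset_of_nonneg hAB (fun _ _ _ => dist_nonneg)
    _ ≤ ∑ a ∈ B, ∑ b ∈ B, dist a b :=
        Finset.sum_le_sum_of_subset_of_nonneg hAB
          (fun _ _ _ => Finset.sum_nonneg fun _ _ => dist_nonneg)

lemma sigmaSum_insert {Z : Type*} [MetricSpace Z] [DecidableEq Z] {A : Finset Z} {x : Z} (hx : x ∉ A) :
    sigmaSum (insert x A) = sigmaSum A + 2 * ∑ y ∈ A, dist x y := by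
  unfold sigmaSum
  rw [Finset.sum_insert hx, Finset.sum_insert hx]
  have h1 : ∀ a ∈ A, ∑ b ∈ insert x A, dist a b = dist a x + ∑ b ∈ A, dist a b :=
    fun a _ => Finset.sum_insert hx
  rw [Finset.sum_congr rfl h1, Finset.sum_add_distrib, dist_self]
  have h2 : ∑ a ∈ A, dist a x = ∑ a ∈ A, dist x a :=
    Finset.sum_congr rfl fun a _ => dist_comm a x
  rw [h2]; ring

/-- In a totally bounded space, `δ`-separated finite sets have bounded cardinality. -/
lemma sep_card_bound {Z : Type*} [MetricSpace Z] (htb : TotallyBounded (Set.univ : Set Z))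
    {δ : ℝ} (hδ : 0 < δ) :
    ∃ N : ℕ, ∀ B : Finset Z, IsSeparated' δ (B : Set Z) → B.card ≤ N := by
  obtain ⟨t, htf, htc⟩ := (Metric.totallyBounded_iff.mp htb) (δ / 2) (by linarith)
  refine ⟨htf.toFinset.card, fun B hB => ?_⟩
  have hc : ∀ b : Z, ∃ c ∈ htf.toFinset, dist b c < δ / 2 := by
    intro b
    have hb := htc (Set.mem_univ b)
    simp only [Set.mem_iUnion] at hb
    obtain ⟨c, hct, hbc⟩ := hb
    exact ⟨c, htf.mem_toFinset.mpr hct, by simpa [Metric.mem_ball] using hbc⟩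
  choose g hg1 hg2 using hc
  refine Finset.card_le_card_of_injOn g (fun b _ => hg1 b) ?_
  intro b1 hb1 b2 hb2 hg
  by_contra hne
  have hsep := hB b1 (by simpa using hb1) b2 (by simpa using hb2) hne
  have t1 : dist b1 b2 ≤ dist b1 (g b1) + dist (g b2) b2 := by
    calc dist b1 b2 ≤ dist b1 (g b1) + dist (g b1) b2 := dist_triangle _ _ _
      _ = dist b1 (g b1) + dist (g b2) b2 := by rw [hg]
  have := hg2 b1
  have := hg2 b2
  have hb2' : dist (g b2) b2 = dist b2 (g b2) := dist_comm _ _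
  linarith

lemma sSep_bddAbove {Z : Type*} [MetricSpace Z] (htb : TotallyBounded (Set.univ : Set Z))
    {δ : ℝ} (hδ : 0 < δ) :
    BddAbove { s : ℝ | ∃ B : Finset Z, B.Nonempty ∧ IsSeparated' δ (B : Set Z) ∧ s = sigmaSum B } := by
  obtain ⟨N, hN⟩ := sep_card_bound htb hδ
  obtain ⟨M, hM⟩ := Metric.isBounded_iff.mp htb.isBounded
  refine ⟨(N : ℝ) * N * max M 0, ?_⟩
  rintro s ⟨B, -, hsep, rfl⟩
  have hcard : (B.card : ℝ) ≤ (N : ℝ) := by exact_mod_cast hN B hsep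
  have hM0 : (0:ℝ) ≤ max M 0 := le_max_right _ _
  have h1 : sigmaSum B ≤ (B.card : ℝ) * B.card * max M 0 := by
    unfold sigmaSum
    calc ∑ a ∈ B, ∑ b ∈ B, dist a b
        ≤ ∑ _a ∈ B, ∑ _b ∈ B, max M 0 :=
          Finset.sum_le_sum fun a _ => Finset.sum_le_sum fun b _ =>
            le_max_of_le_left (hM (Set.mem_univ a) (Set.mem_univ b))
      _ = (B.card : ℝ) * B.card * max M 0 := by
          simp [Finset.sum_const, mul_assoc]
  have hcard0 : (0:ℝ) ≤ (B.card : ℝ) := Nat.cast_nonneg _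
  have h2 : (B.card : ℝ) * B.card ≤ (N : ℝ) * N :=
    mul_le_mul hcard hcard hcard0 (hcard0.trans hcard)
  have h3 := mul_le_mul_of_nonneg_right h2 hM0
  linarith

theorem strongly_plastic_pair_of_sSep_le
    (X Y : Type*) [MetricSpace X] [MetricSpace Y]
    (hXtb : TotallyBounded (Set.univ : Set X))
    (hYtb : TotallyBounded (Set.univ : Set Y))
    (h : ∀ δ : ℝ, 0 < δ → sSep Y δ ≤ sSep X δ)
    (f : X → Y) (hnc : ∀ x y : X, dist x y ≤ dist (f x) (f y)) :
    ∀ x y : X, dist (f x) (f y) = dist x y := by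
  intro a b
  refine le_antisymm ?_ (hnc a b)
  by_contra hcon
  push_neg at hcon
  classical
  set δ : ℝ := (dist (f a) (f b) - dist a b) / 32 with hδdef
  have hδ : 0 < δ := by
    have : 0 < dist (f a) (f b) - dist a b := by linarith
    simpa [hδdef] using by linarith
  -- the defining set for sSep X δ
  set SX : Set ℝ :=
    { s : ℝ | ∃ B : Finset X, B.Nonempty ∧ IsSeparated' δ (B : Set X) ∧ s = sigmaSum B } with hSX
  have hSXne : SX.Nonempty := by
    refine ⟨sigmaSum {a}, {a}, Finset.singleton_nonempty a, ?_, rfl⟩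
    intro u hu v hv huv
    exfalso
    apply huv
    simp only [Finset.coe_singleton, Set.mem_singleton_iff] at hu hv
    rw [hu, hv]
  have hlt' : sSep X δ - δ < sSep X δ := by linarith
  obtain ⟨s₀, hs₀mem, hs₀gt⟩ := exists_lt_of_lt_csSup hSXne (show sSep X δ - δ < sSup SX from hlt')
  obtain ⟨B₀, hB₀ne, hB₀sep, hs₀eq⟩ := hs₀mem
  subst hs₀eq
  -- extend B₀ to a separated set of maximal cardinality
  obtain ⟨N, hN⟩ := sep_card_bound hXtb hδ
  set P : ℕ → Prop := fun n =>
    ∃ B : Finset X, B₀ ⊆ B ∧ IsSeparated' δ (B : Set X) ∧ B.card = n with hP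
  have hP0 : P B₀.card := ⟨B₀, Finset.Subset.refl _, hB₀sep, rfl⟩
  have hPbd : ∀ n, P n → n ≤ N := by
    rintro n ⟨B, -, hsep, rfl⟩; exact hN B hsep
  have hPm : P (Nat.findGreatest P N) :=
    Nat.findGreatest_spec (hPbd _ hP0) hP0
  obtain ⟨B, hB₀B, hBsep, hBcard⟩ := hPm
  -- maximality : every point is within δ of B
  have hmax : ∀ x : X, ∃ z ∈ B, dist x z < δ := by
    intro x
    by_contra hno
    push_neg at hno
    have hxB : x ∉ B := by
      intro hxB
      have := hno x hxB
      simp only [dist_self] at this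
      linarith
    have hins : IsSeparated' δ ((insert x B : Finset X) : Set X) := by
      intro u hu v hv huv
      simp only [Finset.coe_insert, Set.mem_insert_iff, Finset.mem_coe] at hu hv
      rcases hu with rfl | hu <;> rcases hv with rfl | hv
      · exact absurd rfl huv
      · exact hno v hv
      · rw [dist_comm]; exact hno u hu
      · exact hBsep u (by simpa using hu) v (by simpa using hv) huv
    have hcard' : (insert x B).card = Nat.findGreatest P N + 1 := by
      rw [Finset.card_insert_of_notMem hxB, hBcard]
    have hPn1 : P (Nat.findGreatest P N + 1) :=
      ⟨insert x B, hB₀B.trans (Finset.subset_insert _ _), hins, hcard'⟩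
    exact Nat.findGreatest_is_greatest (Nat.lt_succ_self _) (hPbd _ hPn1) hPn1
  -- f is injective on B
  have hinj : ∀ z ∈ B, ∀ w ∈ B, f z = f w → z = w := by
    intro z hz w hw he
    by_contra hne
    have hsep := hBsep z (by simpa using hz) w (by simpa using hw) hne
    have h2 := hnc z w
    rw [he, dist_self] at h2
    linarith
  have himg : sigmaSum (B.image f) = ∑ z ∈ B, ∑ w ∈ B, dist (f z) (f w) := by
    unfold sigmaSum
    rw [Finset.sum_image hinj]
    exact Finset.sum_congr rfl fun z _ => Finset.sum_image hinj
  have himgsep : IsSeparated' δ ((B.image f : Finset Y) : Set Y) := by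
    intro u hu v hv huv
    simp only [Finset.coe_image, Set.mem_image, Finset.mem_coe] at hu hv
    obtain ⟨z, hz, rfl⟩ := hu
    obtain ⟨w, hw, rfl⟩ := hv
    have hzw : z ≠ w := fun hh => huv (by rw [hh])
    calc δ ≤ dist z w := hBsep z (by simpa using hz) w (by simpa using hw) hzw
      _ ≤ dist (f z) (f w) := hnc z w
  have hBneY : (B.image f).Nonempty := (hB₀ne.mono hB₀B).image f
  have hfB_le : sigmaSum (B.image f) ≤ sSep X δ := by
    have h1 : sigmaSum (B.image f) ≤ sSep Y δ :=
      le_csSup (sSep_bddAbove hYtb hδ) ⟨B.image f, hBneY, himgsep, rfl⟩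
    exact h1.trans (h δ hδ)
  have hB_gt : sSep X δ - δ < sigmaSum B := lt_of_lt_of_le hs₀gt (sigmaSum_mono hB₀B)
  -- almost isometry on B
  have hdiff : ∑ z ∈ B, ∑ w ∈ B, (dist (f z) (f w) - dist z w) ≤ δ := by
    have heq : ∑ z ∈ B, ∑ w ∈ B, (dist (f z) (f w) - dist z w)
        = (∑ z ∈ B, ∑ w ∈ B, dist (f z) (f w)) - ∑ z ∈ B, ∑ w ∈ B, dist z w := by
      rw [← Finset.sum_sub_distrib]
      exact Finset.sum_congr rfl fun z _ => Finset.sum_sub_distrib _ _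
    have hsigB : sigmaSum B = ∑ z ∈ B, ∑ w ∈ B, dist z w := rfl
    rw [heq, ← himg, ← hsigB]
    linarith
  have almost : ∀ z ∈ B, ∀ w ∈ B, dist (f z) (f w) ≤ dist z w + δ := by
    intro z hz w hw
    have hterm : dist (f z) (f w) - dist z w
        ≤ ∑ z' ∈ B, ∑ w' ∈ B, (dist (f z') (f w') - dist z' w') := by
      calc dist (f z) (f w) - dist z w
          ≤ ∑ w' ∈ B, (dist (f z) (f w') - dist z w') :=
            Finset.single_le_sum (fun i _ => sub_nonneg.mpr (hnc z i)) hw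
        _ ≤ ∑ z' ∈ B, ∑ w' ∈ B, (dist (f z') (f w') - dist z' w') :=
            Finset.single_le_sum
              (fun i _ => Finset.sum_nonneg fun j _ => sub_nonneg.mpr (hnc i j)) hz
    linarith
  -- points of B near a and b
  obtain ⟨p, hpB, hpa⟩ := hmax a
  obtain ⟨q, hqB, hqb⟩ := hmax b
  have key : 29 * δ ≤ dist (f a) (f p) + dist (f b) (f q) := by
    have t1 : dist (f a) (f b) ≤ dist (f a) (f p) + dist (f p) (f q) + dist (f q) (f b) :=
      dist_triangle4 _ _ _ _
    have t2 : dist (f p) (f q) ≤ dist p q + δ := almost p hpB q hqB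
    have t3 : dist p q ≤ dist p a + dist a b + dist b q := dist_triangle4 _ _ _ _
    have t4 : dist p a = dist a p := dist_comm _ _
    have t5 : dist (f q) (f b) = dist (f b) (f q) := dist_comm _ _
    have t6 : dist (f a) (f b) - dist a b = 32 * δ := by rw [hδdef]; ring
    linarith
  -- jump pair
  obtain ⟨u, v, hvB, huv, hjump⟩ :
      ∃ u v, v ∈ B ∧ dist u v < δ ∧ 8 * δ ≤ dist (f u) (f v) := by
    rcases le_total (dist (f a) (f p)) (dist (f b) (f q)) with hle | hle
    · exact ⟨b, q, hqB, hqb, by linarith⟩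
    · exact ⟨a, p, hpB, hpa, by linarith⟩
  have hsep2 : ∀ z ∈ B, δ ≤ dist (f u) (f z) := by
    intro z hz
    rcases le_or_gt δ (dist u z) with h1 | h1
    · linarith [hnc u z]
    · have t1 : dist (f u) (f v) ≤ dist (f u) (f z) + dist (f z) (f v) := dist_triangle _ _ _
      have t2 : dist (f z) (f v) ≤ dist z v + δ := almost z hz v hvB
      have t3 : dist z v ≤ dist z u + dist u v := dist_triangle _ _ _
      have t4 : dist z u = dist u z := dist_comm _ _
      linarith
  have hfu_not : f u ∉ B.image f := by
    intro hmem
    obtain ⟨z, hz, he⟩ := Finset.mem_image.mp hmem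
    have h1 := hsep2 z hz
    rw [he, dist_self] at h1
    linarith
  set C : Finset Y := insert (f u) (B.image f) with hC
  have hCsep : IsSeparated' δ (C : Set Y) := by
    intro x hx y hy hxy
    simp only [hC, Finset.coe_insert, Set.mem_insert_iff, Finset.coe_image,
      Set.mem_image, Finset.mem_coe] at hx hy
    rcases hx with rfl | ⟨z, hz, rfl⟩ <;> rcases hy with rfl | ⟨w, hw, rfl⟩
    · exact absurd rfl hxy
    · exact hsep2 w hw
    · rw [dist_comm]; exact hsep2 z hz
    · have hzw : z ≠ w := fun hh => hxy (by rw [hh])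
      calc δ ≤ dist z w := hBsep z (by simpa using hz) w (by simpa using hw) hzw
        _ ≤ dist (f z) (f w) := hnc z w
  have hCle : sigmaSum C ≤ sSep X δ := by
    have h1 : sigmaSum C ≤ sSep Y δ :=
      le_csSup (sSep_bddAbove hYtb hδ)
        ⟨C, ⟨f u, Finset.mem_insert_self _ _⟩, hCsep, rfl⟩
    exact h1.trans (h δ hδ)
  have hCval : sigmaSum C = sigmaSum (B.image f) + 2 * ∑ y ∈ B.image f, dist (f u) y :=
    sigmaSum_insert hfu_not
  have himg_ge : sigmaSum B ≤ sigmaSum (B.image f) := by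
    rw [himg]
    exact Finset.sum_le_sum fun z _ => Finset.sum_le_sum fun w _ => hnc z w
  have hpos : δ ≤ ∑ y ∈ B.image f, dist (f u) y := by
    obtain ⟨y₀, hy₀⟩ := hBneY
    have h1 : δ ≤ dist (f u) y₀ := by
      obtain ⟨z, hz, rfl⟩ := Finset.mem_image.mp hy₀
      exact hsep2 z hz
    calc δ ≤ dist (f u) y₀ := h1
      _ ≤ ∑ y ∈ B.image f, dist (f u) y :=
        Finset.single_le_sum (f := fun y => dist (f u) y) (fun i _ => dist_nonneg) hy₀
  linarith
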